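/- arXiv:2506.10866 — 2 statements merged into one kernel-verified Lean document; each statement's English description precedes it below -/
import Mathlib

section
/- Let A₀, A₁ ∈ ℝ^{n×n}, B₀, B₁ ∈ ℝ^{n×1}, S ∈ ℝ^{ν×ν}, L ∈ ℝ^{1×ν}, and for each degree j ≥ 0 suppose Π_j ∈ ℝ^{n×ν} satisfies the nested Sylvester equations Π₀S = A₀Π₀ + B₀L, Π₁S = A₀Π₁ + A₁Π₀ + B₁L, and Π_jS = A₀Π_j + A₁Π_{j−1} for j ≥ 2. If the series Π(p) = Σ_{j≥0} p^j Π_j converges absolutely (entrywise) at some p ∈ ℝ, then Π(p) satisfies the parametric Sylvester equation (A₀ + pA₁)Π(p) + (B₀ + pB₁)L = Π(p)S. -/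
open Matrix

theorem series_solves_parametric_sylvester {n ν : ℕ}
    (A₀ A₁ : Matrix (Fin n) (Fin n) ℝ)
    (B₀ B₁ : Matrix (Fin n) (Fin 1) ℝ)
    (S : Matrix (Fin ν) (Fin ν) ℝ) (L : Matrix (Fin 1) (Fin ν) ℝ)
    (Ps : ℕ → Matrix (Fin n) (Fin ν) ℝ)
    (h0 : Ps 0 * S = A₀ * Ps 0 + B₀ * L)
    (h1 : Ps 1 * S = A₀ * Ps 1 + A₁ * Ps 0 + B₁ * L)
    (hj : ∀ j, 2 ≤ j → Ps j * S = A₀ * Ps j + A₁ * Ps (j - 1))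
    (p : ℝ)
    (hconv : ∀ (i : Fin n) (k : Fin ν), Summable (fun j : ℕ => |p ^ j * Ps j i k|)) :
    (A₀ + p • A₁) * (Matrix.of fun i k => ∑' j : ℕ, p ^ j * Ps j i k) +
      (B₀ + p • B₁) * L =
    (Matrix.of fun i k => ∑' j : ℕ, p ^ j * Ps j i k) * S := by

  have hS : ∀ (a : Fin n) (b : Fin ν), Summable fun j : ℕ => p ^ j * Ps j a b :=
    fun a b => summable_abs_iff.mp (hconv a b)
  ext i k
  simp only [Matrix.add_apply, Matrix.mul_apply, Matrix.smul_apply, Matrix.of_apply,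
    smul_eq_mul]
  -- abbreviations
  set b : ℕ → ℝ := fun j => p ^ j * ((A₀ * Ps j) i k) with hbdef
  set c : ℕ → ℝ := fun j => p * (p ^ j * ((A₁ * Ps j) i k)) with hcdef
  set a : ℕ → ℝ := fun j => p ^ j * ((Ps j * S) i k) with hadef
  -- entrywise summabilities of products
  have hsum_left : ∀ (M : Matrix (Fin n) (Fin n) ℝ),
      Summable fun j : ℕ => p ^ j * ((M * Ps j) i k) := by
    intro M
    have : Summable fun j : ℕ => ∑ m, M i m * (p ^ j * Ps j m k) :=
      summable_sum fun m _ => (hS m k).mul_left _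
    refine this.congr fun j => ?_
    rw [Matrix.mul_apply, Finset.mul_sum]
    exact Finset.sum_congr rfl fun m _ => by ring
  have hb : Summable b := hsum_left A₀
  have hc : Summable c := ((hsum_left A₁)).mul_left p
  have ha : Summable a := by
    have : Summable fun j : ℕ => ∑ m, (p ^ j * Ps j i m) * S m k :=
      summable_sum fun m _ => (hS i m).mul_right _
    refine this.congr fun j => ?_
    simp only [hadef]
    rw [Matrix.mul_apply, Finset.mul_sum]
    exact Finset.sum_congr rfl fun m _ => by ring
  -- rewrite both sides as tsums
  have key_left : ∀ (M : Matrix (Fin n) (Fin n) ℝ),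
      (∑ m, M i m * ∑' j : ℕ, p ^ j * Ps j m k)
        = ∑' j : ℕ, p ^ j * ((M * Ps j) i k) := by
    intro M
    calc (∑ m, M i m * ∑' j : ℕ, p ^ j * Ps j m k)
        = ∑ m, ∑' j : ℕ, M i m * (p ^ j * Ps j m k) := by
          exact Finset.sum_congr rfl fun m _ => (tsum_mul_left).symm
      _ = ∑' j : ℕ, ∑ m, M i m * (p ^ j * Ps j m k) :=
          (Summable.tsum_finsetSum fun m _ => (hS m k).mul_left _).symm
      _ = ∑' j : ℕ, p ^ j * ((M * Ps j) i k) := by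
          refine tsum_congr fun j => ?_
          rw [Matrix.mul_apply, Finset.mul_sum]
          exact Finset.sum_congr rfl fun m _ => by ring
  have key_right :
      (∑ m, (∑' j : ℕ, p ^ j * Ps j i m) * S m k)
        = ∑' j : ℕ, a j := by
    calc (∑ m, (∑' j : ℕ, p ^ j * Ps j i m) * S m k)
        = ∑ m, ∑' j : ℕ, (p ^ j * Ps j i m) * S m k := by
          exact Finset.sum_congr rfl fun m _ => (tsum_mul_right).symm
      _ = ∑' j : ℕ, ∑ m, (p ^ j * Ps j i m) * S m k :=
          (Summable.tsum_finsetSum fun m _ => (hS i m).mul_right _).symm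
      _ = ∑' j : ℕ, a j := by
          refine tsum_congr fun j => ?_
          simp only [hadef]
          rw [Matrix.mul_apply, Finset.mul_sum]
          exact Finset.sum_congr rfl fun m _ => by ring
  -- split (A₀ + p A₁)
  have split : (∑ m, (A₀ i m + p * A₁ i m) * ∑' j : ℕ, p ^ j * Ps j m k)
      = (∑' j : ℕ, b j) + ∑' j : ℕ, c j := by
    have : (∑ m, (A₀ i m + p * A₁ i m) * ∑' j : ℕ, p ^ j * Ps j m k)
        = (∑ m, A₀ i m * ∑' j : ℕ, p ^ j * Ps j m k)
          + p * ∑ m, A₁ i m * ∑' j : ℕ, p ^ j * Ps j m k := by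
      rw [Finset.mul_sum, ← Finset.sum_add_distrib]
      exact Finset.sum_congr rfl fun m _ => by ring
    rw [this, key_left A₀, key_left A₁, ← tsum_mul_left]
  -- the B-term
  have hBterm : (∑ m : Fin 1, (B₀ i m + p * B₁ i m) * L m k)
      = (B₀ * L) i k + p * ((B₁ * L) i k) := by
    rw [Matrix.mul_apply, Matrix.mul_apply, Finset.mul_sum, ← Finset.sum_add_distrib]
    exact Finset.sum_congr rfl fun m _ => by ring
  rw [split, hBterm, key_right]
  -- recurrence facts entrywise
  have ha0 : a 0 = b 0 + (B₀ * L) i k := by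
    simp only [hadef, hbdef, h0, Matrix.add_apply, pow_zero, one_mul]
  have ha1 : a 1 = b 1 + c 0 + p * ((B₁ * L) i k) := by
    simp only [hadef, hbdef, hcdef, h1, Matrix.add_apply, pow_one, pow_zero]
    ring
  have han : ∀ j : ℕ, a (j + 2) = b (j + 2) + c (j + 1) := by
    intro j
    have h := hj (j + 2) (by omega)
    simp only [hadef, hbdef, hcdef, h, Matrix.add_apply]
    have : j + 2 - 1 = j + 1 := by omega
    rw [this]
    ring
  -- shifted sum computation
  have hd2 : Summable fun j : ℕ => a (j + 2) :=
    (summable_nat_add_iff 2).mpr ha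
  have hb2 : Summable fun j : ℕ => b (j + 2) :=
    (summable_nat_add_iff 2).mpr hb
  have hc1 : Summable fun j : ℕ => c (j + 1) :=
    (summable_nat_add_iff 1).mpr hc
  have step1 : ∑' j : ℕ, a j = a 0 + (a 1 + ∑' j : ℕ, a (j + 2)) := by
    rw [Summable.tsum_eq_zero_add ha, Summable.tsum_eq_zero_add ((summable_nat_add_iff 1).mpr ha)]
  have step2 : ∑' j : ℕ, a (j + 2) = (∑' j : ℕ, b (j + 2)) + ∑' j : ℕ, c (j + 1) := by
    rw [← Summable.tsum_add hb2 hc1]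
    exact tsum_congr fun j => han j
  have stepb : ∑' j : ℕ, b j = b 0 + (b 1 + ∑' j : ℕ, b (j + 2)) := by
    rw [Summable.tsum_eq_zero_add hb, Summable.tsum_eq_zero_add ((summable_nat_add_iff 1).mpr hb)]
  have stepc : ∑' j : ℕ, c j = c 0 + ∑' j : ℕ, c (j + 1) := Summable.tsum_eq_zero_add hc
  rw [step1, step2, stepb, stepc, ha0, ha1]
  ring
end

section
/- Let A ∈ ℝ^{n×n}, B ∈ ℝ^{n×1}, S ∈ ℝ^{ν×ν}, L ∈ ℝ^{1×ν} with ν ≤ n, and let Π ∈ ℝ^{n×ν} have full column rank and solve AΠ + BL = ΠS. Suppose X ∈ ℝ^{n×n} is symmetric positive definite with AᵀX + XA ≺ 0. Define X̃ = ΠᵀXΠ and G = X̃^{−1}ΠᵀXB. Then X̃ is symmetric positive definite and (S − GL)ᵀX̃ + X̃(S − GL) = Πᵀ(AᵀX + XA)Π ⪯ 0 with the inequality strict; hence S − GL is Hurwitz. -/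
open Matrix
open scoped ComplexOrder

/-- A real square matrix is Hurwitz if every (complex) eigenvalue has
strictly negative real part. -/
def Hurwitz {n : ℕ} (A : Matrix (Fin n) (Fin n) ℝ) : Prop :=
  ∀ μ ∈ spectrum ℂ (A.map (fun x => (x : ℂ))), μ.re < 0

private lemma real_isHermitian_iff {k : ℕ} (M : Matrix (Fin k) (Fin k) ℝ) :
    M.IsHermitian ↔ Mᵀ = M := by
  rw [Matrix.IsHermitian, Matrix.conjTranspose_eq_transpose_of_trivial]

/-- Congruence preserves positive definiteness when the map has full column rank. -/
private lemma posDef_conj {m k : ℕ} (P : Matrix (Fin m) (Fin k) ℝ)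
    (hP : Function.Injective P.mulVec)
    {X : Matrix (Fin m) (Fin m) ℝ} (hX : X.PosDef) : (Pᵀ * X * P).PosDef := by
  rw [Matrix.posDef_iff_dotProduct_mulVec]
  constructor
  · rw [real_isHermitian_iff]
    have hXs : Xᵀ = X := (real_isHermitian_iff X).mp hX.1
    rw [Matrix.transpose_mul, Matrix.transpose_mul, Matrix.transpose_transpose, hXs,
      ← Matrix.mul_assoc]
  · intro x hx
    have hPx : P *ᵥ x ≠ 0 := by
      intro h
      exact hx (hP (by rw [h, Matrix.mulVec_zero]))
    have key : star x ⬝ᵥ ((Pᵀ * X * P) *ᵥ x) = star (P *ᵥ x) ⬝ᵥ (X *ᵥ (P *ᵥ x)) := by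
      rw [← Matrix.mulVec_mulVec, ← Matrix.mulVec_mulVec]
      rw [Matrix.dotProduct_mulVec (star x) Pᵀ]
      have : star x ᵥ* Pᵀ = star (P *ᵥ x) := by
        simp [Matrix.vecMul_transpose, star_trivial]
      rw [this]
    rw [key]
    exact hX.dotProduct_mulVec_pos hPx

private lemma map_posDef {k : ℕ} {M : Matrix (Fin k) (Fin k) ℝ} (hM : M.PosDef) :
    (M.map (fun x => (x : ℂ))).PosDef := by
  have hMs : Mᵀ = M := (real_isHermitian_iff M).mp hM.1
  set Mc := M.map (fun x => (x : ℂ)) with hMc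
  have hMcT : Mcᵀ = Mc := by
    rw [hMc, ← Matrix.transpose_map, hMs]
  rw [Matrix.posDef_iff_dotProduct_mulVec]
  constructor
  · ext i j
    simp only [Matrix.conjTranspose_apply, hMc, Matrix.map_apply, RCLike.star_def,
      Complex.conj_ofReal, Complex.ofReal_inj]
    exact congrFun (congrFun hMs.symm j) i
  · intro v hv
    set a : Fin k → ℝ := fun i => (v i).re with ha
    set b : Fin k → ℝ := fun i => (v i).im with hb
    set va : Fin k → ℂ := fun i => ((a i : ℝ) : ℂ) with hva
    set vb : Fin k → ℂ := fun i => ((b i : ℝ) : ℂ) with hvb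
    have hvdecomp : v = va + Complex.I • vb := by
      funext i
      simp [hva, hvb, ha, hb, Complex.ext_iff]
    have hstar : star v = va - Complex.I • vb := by
      funext i
      simp [hva, hvb, ha, hb, Complex.ext_iff]
    -- real dot products map to complex
    have hmap : ∀ (x y : Fin k → ℝ),
        (fun i => ((x i : ℝ) : ℂ)) ⬝ᵥ (Mc *ᵥ (fun i => ((y i : ℝ) : ℂ)))
          = ((x ⬝ᵥ (M *ᵥ y) : ℝ) : ℂ) := by
      intro x y
      have h1 : (fun i => ((y i : ℝ) : ℂ)) = (Complex.ofRealHom : ℝ →+* ℂ) ∘ y := rfl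
      have h2 : Mc *ᵥ ((Complex.ofRealHom : ℝ →+* ℂ) ∘ y)
          = (Complex.ofRealHom : ℝ →+* ℂ) ∘ (M *ᵥ y) := by
        funext i
        exact (RingHom.map_mulVec (Complex.ofRealHom) M y i).symm
      rw [h1, h2]
      have h0 : (fun i => ((x i : ℝ) : ℂ)) = (Complex.ofRealHom : ℝ →+* ℂ) ∘ x := rfl
      rw [h0, ← RingHom.map_dotProduct]
      rfl
    have hcross : va ⬝ᵥ (Mc *ᵥ vb) = vb ⬝ᵥ (Mc *ᵥ va) := by
      rw [Matrix.dotProduct_mulVec, dotProduct_comm, ← Matrix.mulVec_transpose, hMcT]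
    have hq : star v ⬝ᵥ (Mc *ᵥ v)
        = ((a ⬝ᵥ (M *ᵥ a) + b ⬝ᵥ (M *ᵥ b) : ℝ) : ℂ) := by
      rw [hstar]
      conv_lhs => rw [hvdecomp]
      rw [Matrix.mulVec_add, Matrix.mulVec_smul]
      rw [sub_dotProduct, dotProduct_add, dotProduct_add]
      rw [smul_dotProduct, smul_dotProduct, dotProduct_smul,
        dotProduct_smul]
      rw [hcross, hmap a a, hmap b b, hmap b a]
      simp only [smul_eq_mul]
      push_cast
      linear_combination (-((b ⬝ᵥ (M *ᵥ b) : ℝ) : ℂ)) * Complex.I_mul_I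
    rw [hq]
    -- positivity of the real quantity
    have hab : a ≠ 0 ∨ b ≠ 0 := by
      by_contra h
      push_neg at h
      apply hv
      funext i
      have h1 : a i = 0 := by rw [h.1]; rfl
      have h2 : b i = 0 := by rw [h.2]; rfl
      simp [Complex.ext_iff, ha, hb] at h1 h2 ⊢
      exact ⟨h1, h2⟩
    have hpos : 0 < a ⬝ᵥ (M *ᵥ a) + b ⬝ᵥ (M *ᵥ b) := by
      have hsa : 0 ≤ a ⬝ᵥ (M *ᵥ a) := by
        simpa [star_trivial] using hM.posSemidef.dotProduct_mulVec_nonneg a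
      have hsb : 0 ≤ b ⬝ᵥ (M *ᵥ b) := by
        simpa [star_trivial] using hM.posSemidef.dotProduct_mulVec_nonneg b
      rcases hab with h | h
      · have := hM.dotProduct_mulVec_pos h
        simp only [star_trivial] at this
        linarith
      · have := hM.dotProduct_mulVec_pos h
        simp only [star_trivial] at this
        linarith
    exact Complex.zero_lt_real.mpr hpos

private lemma lyapunov_hurwitz {k : ℕ} {N Xt : Matrix (Fin k) (Fin k) ℝ}
    (hXt : Xt.PosDef) (hQ : (-(Nᵀ * Xt + Xt * N)).PosDef) : Hurwitz N := by
  intro μ hμ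
  set Nc := N.map (fun x => (x : ℂ)) with hNc
  set Xtc := Xt.map (fun x => (x : ℂ)) with hXtc
  have hXtcpd : Xtc.PosDef := map_posDef hXt
  have hQc : ((-(Nᵀ * Xt + Xt * N)).map (fun x => (x : ℂ))).PosDef := map_posDef hQ
  -- extract an eigenvector
  rw [← AlgEquiv.spectrum_eq (Matrix.toLinAlgEquiv' (R := ℂ) (n := Fin k)) Nc] at hμ
  obtain ⟨v, hv⟩ :=
    (Module.End.hasEigenvalue_iff_mem_spectrum.mpr hμ).exists_hasEigenvector
  have heig : Nc *ᵥ v = μ • v := hv.apply_eq_smul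
  have hv0' := hv.right
  set p := star v ⬝ᵥ (Xtc *ᵥ v) with hp
  have hppos : 0 < p := hXtcpd.dotProduct_mulVec_pos hv0'
  -- transpose/conj facts
  have hNcH : Ncᴴ = Ncᵀ := by
    ext i j
    simp [hNc, Matrix.conjTranspose_apply, Matrix.map_apply]
  have hstar_eig : Nc *ᵥ star v = star (Nc *ᵥ v) := by
    rw [Matrix.star_mulVec, hNcH, Matrix.vecMul_transpose]
  -- compute the quadratic form of the Lyapunov expression
  have hkey : star v ⬝ᵥ (((Nᵀ * Xt + Xt * N).map (fun x => (x : ℂ))) *ᵥ v)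
      = (μ + (starRingEnd ℂ) μ) * p := by
    have hmapmul : (Nᵀ * Xt + Xt * N).map (fun x => (x : ℂ)) = Ncᵀ * Xtc + Xtc * Nc := by
      ext i j
      simp only [Matrix.map_apply, Matrix.add_apply, Matrix.mul_apply, Matrix.transpose_apply,
        hNc, hXtc]
      push_cast
      ring
    rw [hmapmul, Matrix.add_mulVec, dotProduct_add,
      ← Matrix.mulVec_mulVec, ← Matrix.mulVec_mulVec]
    have t2 : star v ⬝ᵥ (Xtc *ᵥ (Nc *ᵥ v)) = μ * p := by
      rw [heig, Matrix.mulVec_smul, dotProduct_smul, hp, smul_eq_mul]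
    have t1 : star v ⬝ᵥ (Ncᵀ *ᵥ (Xtc *ᵥ v)) = (starRingEnd ℂ) μ * p := by
      rw [Matrix.dotProduct_mulVec, Matrix.vecMul_transpose, hstar_eig, heig]
      rw [star_smul, smul_dotProduct, hp, smul_eq_mul]
      rfl
    rw [t1, t2]
    ring
  -- positivity of the negated quadratic form
  have hneg : 0 < star v ⬝ᵥ (((-(Nᵀ * Xt + Xt * N)).map (fun x => (x : ℂ))) *ᵥ v) :=
    hQc.dotProduct_mulVec_pos hv0'
  have hnegmap : ((-(Nᵀ * Xt + Xt * N)).map (fun x => (x : ℂ)))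
      = -((Nᵀ * Xt + Xt * N).map (fun x => (x : ℂ))) := by
    ext i j
    simp [Matrix.map_apply]
  rw [hnegmap, Matrix.neg_mulVec, dotProduct_neg, hkey] at hneg
  -- conclude
  have h2re : μ + (starRingEnd ℂ) μ = ((2 * μ.re : ℝ) : ℂ) := Complex.add_conj μ
  rw [h2re] at hneg
  rw [Complex.lt_def] at hneg hppos
  simp only [Complex.zero_re, Complex.zero_im, Complex.neg_re, Complex.neg_im] at hneg hppos
  have hre : (((2 * μ.re : ℝ) : ℂ) * p).re = 2 * μ.re * p.re := by
    rw [Complex.mul_re]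
    simp [← hppos.2]
  rw [hre] at hneg
  nlinarith [hppos.1, hneg.1]

theorem reduced_order_lyapunov {n ν : ℕ} (hn : ν ≤ n)
    (A : Matrix (Fin n) (Fin n) ℝ) (B : Matrix (Fin n) (Fin 1) ℝ)
    (S : Matrix (Fin ν) (Fin ν) ℝ) (L : Matrix (Fin 1) (Fin ν) ℝ)
    (P : Matrix (Fin n) (Fin ν) ℝ) (hrank : P.rank = ν)
    (hsylv : A * P + B * L = P * S)
    (X : Matrix (Fin n) (Fin n) ℝ) (hX : X.PosDef)
    (hlyap : (-(Aᵀ * X + X * A)).PosDef)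
    (Xt : Matrix (Fin ν) (Fin ν) ℝ) (hXt : Xt = Pᵀ * X * P)
    (G : Matrix (Fin ν) (Fin 1) ℝ) (hG : G = Xt⁻¹ * (Pᵀ * X * B)) :
    Xt.PosDef ∧
    (S - G * L)ᵀ * Xt + Xt * (S - G * L) = Pᵀ * (Aᵀ * X + X * A) * P ∧
    (-((S - G * L)ᵀ * Xt + Xt * (S - G * L))).PosDef ∧
    Hurwitz (S - G * L) := by
  -- P has injective mulVec
  have hPinj : Function.Injective P.mulVec := by
    rw [Matrix.mulVec_injective_iff]
    rw [linearIndependent_iff_card_eq_finrank_span]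
    rw [Set.finrank, ← Matrix.rank_eq_finrank_span_cols, hrank, Fintype.card_fin]
  have hXtpd : Xt.PosDef := hXt ▸ posDef_conj P hPinj hX
  have hXs : Xᵀ = X := (real_isHermitian_iff X).mp hX.1
  have hXts : Xtᵀ = Xt := (real_isHermitian_iff Xt).mp hXtpd.1
  -- Xt * G = Pᵀ X B
  have hXtdet : IsUnit Xt.det := isUnit_iff_ne_zero.mpr hXtpd.det_pos.ne'
  have hXtG : Xt * G = Pᵀ * X * B := by
    rw [hG, ← Matrix.mul_assoc, Matrix.mul_nonsing_inv Xt hXtdet, Matrix.one_mul]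
  have hps : P * S - B * L = A * P := by
    rw [← hsylv]; exact add_sub_cancel_right _ _
  have h1 : Xt * (S - G * L) = Pᵀ * X * A * P := by
    rw [Matrix.mul_sub, ← Matrix.mul_assoc, hXtG, hXt,
      Matrix.mul_assoc (Pᵀ * X) P S, Matrix.mul_assoc (Pᵀ * X) B L,
      ← Matrix.mul_sub, hps, ← Matrix.mul_assoc]
  have h2 : (S - G * L)ᵀ * Xt = Pᵀ * Aᵀ * X * P := by
    have ht := congrArg Matrix.transpose h1
    rw [Matrix.transpose_mul, hXts] at ht
    rw [ht, Matrix.transpose_mul, Matrix.transpose_mul, Matrix.transpose_mul,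
      Matrix.transpose_transpose, hXs, ← Matrix.mul_assoc, ← Matrix.mul_assoc]
  have hid : (S - G * L)ᵀ * Xt + Xt * (S - G * L) = Pᵀ * (Aᵀ * X + X * A) * P := by
    rw [h1, h2, Matrix.mul_add, Matrix.add_mul, Matrix.mul_assoc Pᵀ Aᵀ X,
      Matrix.mul_assoc Pᵀ X A]
  have hnegid : -((S - G * L)ᵀ * Xt + Xt * (S - G * L)) = Pᵀ * (-(Aᵀ * X + X * A)) * P := by
    rw [hid, Matrix.mul_neg, Matrix.neg_mul]
  have hnpd : (-((S - G * L)ᵀ * Xt + Xt * (S - G * L))).PosDef := by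
    rw [hnegid]
    exact posDef_conj P hPinj hlyap
  refine ⟨hXtpd, hid, hnpd, ?_⟩
  exact lyapunov_hurwitz hXtpd hnpd
end
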